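/- For every α ≥ 0, the function f_α : ℝⁿ → ℝ defined by f_α(x) = ‖x‖^{1+α} + (α-1)/2 if ‖x‖ ≤ 1 and f_α(x) = ((1+α)/2)‖x‖² if ‖x‖ > 1 is convex on ℝⁿ. -/

import Mathlib

open Set Real

variable {α : ℝ}

private noncomputable def gA (α : ℝ) : ℝ → ℝ :=
  fun r => if r ≤ 1 then r ^ (1 + α) + (α - 1) / 2 else ((1 + α) / 2) * r ^ (2 : ℕ)

private noncomputable def dA (α : ℝ) : ℝ → ℝ :=
  fun r => if r ≤ 1 then (1 + α) * r ^ α else (1 + α) * r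

private lemma gA_hasDerivAt (hα : 0 ≤ α) {r : ℝ} (hr : 0 < r) :
    HasDerivAt (gA α) (dA α r) r := by
  have hu : ∀ x : ℝ, HasDerivAt (fun t : ℝ => t ^ (1 + α) + (α - 1) / 2)
      ((1 + α) * x ^ α) x := by
    intro x
    have := (Real.hasDerivAt_rpow_const (x := x) (p := 1 + α) (Or.inr (by linarith))).add_const
      ((α - 1) / 2)
    simpa using this
  have hv : ∀ x : ℝ, HasDerivAt (fun t : ℝ => ((1 + α) / 2) * t ^ (2 : ℕ))
      ((1 + α) * x) x := by
    intro x
    have := (hasDerivAt_pow 2 x).const_mul ((1 + α) / 2)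
    exact this.congr_deriv (by norm_num; ring)
  rcases lt_trichotomy r 1 with h | h | h
  · have heq : gA α =ᶠ[nhds r] fun t : ℝ => t ^ (1 + α) + (α - 1) / 2 := by
      filter_upwards [Iio_mem_nhds h] with t ht
      simp [gA, le_of_lt (mem_Iio.mp ht)]
    have : HasDerivAt (gA α) ((1 + α) * r ^ α) r := (hu r).congr_of_eventuallyEq heq
    simpa [dA, h.le] using this
  · subst h
    have key : (1:ℝ) + (α - 1) / 2 = ((1 + α) / 2) * (1:ℝ) ^ (2 : ℕ) := by ring
    have h1 : HasDerivWithinAt (gA α) ((1 + α) * 1 ^ α) (Iic 1) 1 := by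
      refine ((hu 1).hasDerivWithinAt (s := Iic 1)).congr (fun t ht => ?_) ?_
      · simp [gA, mem_Iic.mp ht]
      · simp [gA]
    have h2 : HasDerivWithinAt (gA α) ((1 + α) * 1 ^ α) (Ici 1) 1 := by
      have : HasDerivWithinAt (gA α) ((1 + α) * 1) (Ici 1) 1 := by
        refine ((hv 1).hasDerivWithinAt (s := Ici 1)).congr (fun t ht => ?_) ?_
        · rcases eq_or_lt_of_le (mem_Ici.mp ht) with h' | h'
          · simp [gA, ← h', Real.one_rpow]; linarith
          · simp [gA, not_le.mpr h']
        · simp [gA, Real.one_rpow]; linarith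
      simpa [Real.rpow_natCast] using this
    have h3 := h1.union h2
    rw [Iic_union_Ici] at h3
    have h4 := h3.hasDerivAt (by simp)
    simpa [dA] using h4
  · have heq : gA α =ᶠ[nhds r] fun t : ℝ => ((1 + α) / 2) * t ^ (2 : ℕ) := by
      filter_upwards [Ioi_mem_nhds h] with t ht
      simp [gA, not_le.mpr (mem_Ioi.mp ht)]
    have : HasDerivAt (gA α) ((1 + α) * r) r := (hv r).congr_of_eventuallyEq heq
    simpa [dA, not_le.mpr h] using this

private lemma dA_mono (hα : 0 ≤ α) : MonotoneOn (dA α) (Ioi 0) := by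
  intro a ha b hb hab
  have ha0 : (0:ℝ) < a := ha
  have hb0 : (0:ℝ) < b := hb
  have h1α : (0:ℝ) ≤ 1 + α := by linarith
  unfold dA
  by_cases hb1 : b ≤ 1
  · have ha1 : a ≤ 1 := hab.trans hb1
    rw [if_pos ha1, if_pos hb1]
    exact mul_le_mul_of_nonneg_left (Real.rpow_le_rpow ha0.le hab hα) h1α
  · rw [if_neg hb1]
    push_neg at hb1
    by_cases ha1 : a ≤ 1
    · rw [if_pos ha1]
      have h1 : a ^ α ≤ 1 := Real.rpow_le_one ha0.le ha1 hα
      have : a ^ α ≤ b := h1.trans hb1.le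
      exact mul_le_mul_of_nonneg_left this h1α
    · rw [if_neg ha1]
      exact mul_le_mul_of_nonneg_left hab h1α

private lemma gA_convexOn (hα : 0 ≤ α) : ConvexOn ℝ (Ici 0) (gA α) := by
  have hcont : Continuous (gA α) := by
    apply Continuous.if_le
    · exact (Real.continuous_rpow_const (by linarith)).add continuous_const
    · exact continuous_const.mul (continuous_pow 2)
    · exact continuous_id
    · exact continuous_const
    · intro x hx
      subst hx
      rw [Real.one_rpow]; ring
  refine MonotoneOn.convexOn_of_deriv (convex_Ici 0) hcont.continuousOn ?_ ?_
  · rw [interior_Ici]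
    intro r hr
    exact ((gA_hasDerivAt hα hr).differentiableAt).differentiableWithinAt
  · rw [interior_Ici]
    intro a ha b hb hab
    rw [(gA_hasDerivAt hα ha).deriv, (gA_hasDerivAt hα hb).deriv]
    exact dA_mono hα ha hb hab

private lemma dA_nonneg (hα : 0 ≤ α) {r : ℝ} (hr : 0 < r) : 0 ≤ dA α r := by
  unfold dA
  have h1α : (0:ℝ) ≤ 1 + α := by linarith
  split
  · exact mul_nonneg h1α (Real.rpow_nonneg hr.le α)
  · exact mul_nonneg h1α hr.le

private lemma gA_mono (hα : 0 ≤ α) : MonotoneOn (gA α) (Ici 0) := by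
  have hcont : Continuous (gA α) := by
    apply Continuous.if_le
    · exact (Real.continuous_rpow_const (by linarith)).add continuous_const
    · exact continuous_const.mul (continuous_pow 2)
    · exact continuous_id
    · exact continuous_const
    · intro x hx
      subst hx
      rw [Real.one_rpow]; ring
  have := monotoneOn_of_deriv_nonneg (convex_Ici 0) hcont.continuousOn
    (f := gA α) ?_ ?_
  · exact this
  · rw [interior_Ici]
    intro r hr
    exact ((gA_hasDerivAt hα hr).differentiableAt).differentiableWithinAt
  · rw [interior_Ici]
    intro r hr
    rw [(gA_hasDerivAt hα hr).deriv]
    exact dA_nonneg hα hr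

/-- For every `α ≥ 0`, the radial function `f_α` on `ℝⁿ`, equal to
`‖x‖^(1+α) + (α-1)/2` for `‖x‖ ≤ 1` and `((1+α)/2)‖x‖²` for `‖x‖ > 1`, is convex. -/
theorem fAlpha_convex (n : ℕ) (hn : 1 ≤ n) (α : ℝ) (hα : 0 ≤ α) :
    ConvexOn ℝ Set.univ (fun x : EuclideanSpace ℝ (Fin n) =>
      if ‖x‖ ≤ 1 then ‖x‖ ^ (1 + α) + (α - 1) / 2 else ((1 + α) / 2) * ‖x‖ ^ (2 : ℕ)) := by
  have himg : (fun x : EuclideanSpace ℝ (Fin n) => ‖x‖) '' Set.univ = Ici 0 := by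
    apply Set.eq_of_subset_of_subset
    · rintro _ ⟨x, -, rfl⟩
      exact norm_nonneg x
    · intro r hr
      refine ⟨EuclideanSpace.single (⟨0, hn⟩ : Fin n) r, Set.mem_univ _, ?_⟩
      show ‖EuclideanSpace.single (⟨0, hn⟩ : Fin n) r‖ = r
      rw [EuclideanSpace.norm_single]
      exact abs_of_nonneg hr
  have hcomp : ConvexOn ℝ Set.univ
      ((gA α) ∘ (fun x : EuclideanSpace ℝ (Fin n) => ‖x‖)) := by
    refine ConvexOn.comp ?_ convexOn_univ_norm ?_
    · rw [himg]; exact gA_convexOn hα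
    · rw [himg]; exact gA_mono hα
  convert hcomp using 2 with x
  rfl
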